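/- Let M ≤ N be positive integers and let c > 0 be a real constant. Then every matrix Φ ∈ ℂ^{M×N} satisfies ‖Φᴴ·Φ − c·I_N‖_F² ≥ (N−M)·c², and equality holds if and only if Φ·Φᴴ = c·I_M, i.e., if and only if the rows of Φ are mutually orthogonal and all have squared Euclidean norm c. -/

import Mathlib

open Matrix

/-- Squared Frobenius norm of a complex matrix. -/
noncomputable def frobSq {m n : Type*} [Fintype m] [Fintype n] (X : Matrix m n ℂ) : ℝ :=
  ∑ i, ∑ j, ‖X i j‖ ^ 2

lemma frobSq_eq_trace {m n : Type*} [Fintype m] [Fintype n] (X : Matrix m n ℂ) :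
    frobSq X = (trace (Xᴴ * X)).re := by
  rw [frobSq, trace]
  simp only [diag, mul_apply, conjTranspose_apply, Complex.re_sum]
  rw [Finset.sum_comm]
  congr 1; ext i; congr 1; ext j
  simp [RCLike.star_def, Complex.conj_mul', ← Complex.ofReal_pow, Complex.sq_norm]

lemma frobSq_nonneg {m n : Type*} [Fintype m] [Fintype n] (X : Matrix m n ℂ) :
    0 ≤ frobSq X :=
  Finset.sum_nonneg fun _ _ => Finset.sum_nonneg fun _ _ => sq_nonneg _

lemma frobSq_eq_zero_iff {m n : Type*} [Fintype m] [Fintype n] (X : Matrix m n ℂ) :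
    frobSq X = 0 ↔ X = 0 := by
  constructor
  · intro h
    ext i j
    have h1 := (Finset.sum_eq_zero_iff_of_nonneg (fun a _ =>
      Finset.sum_nonneg fun b _ => sq_nonneg ‖X a b‖)).mp h i (Finset.mem_univ i)
    have h2 := (Finset.sum_eq_zero_iff_of_nonneg (fun j _ => sq_nonneg ‖X i j‖)).mp h1 j
      (Finset.mem_univ j)
    simpa using pow_eq_zero_iff (n := 2) (by norm_num) |>.mp h2
  · intro h; simp [h, frobSq]

lemma key_trace {m : Type*} [Fintype m] [DecidableEq m] (A : Matrix m m ℂ) (hA : Aᴴ = A)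
    (c : ℝ) :
    trace ((A - (c:ℂ) • 1)ᴴ * (A - (c:ℂ) • 1)) =
      trace (A * A) - 2 * c * trace A + (c:ℂ)^2 * (Fintype.card m) := by
  have hS : ((c:ℂ) • (1 : Matrix m m ℂ))ᴴ = (c:ℂ) • 1 := by
    simp [conjTranspose_smul, Complex.conj_ofReal]
  rw [conjTranspose_sub, hA, hS]
  simp only [sub_mul, mul_sub, trace_sub, smul_mul_assoc, mul_smul_comm, one_mul,
    Matrix.mul_one, trace_smul, smul_smul, trace_one, smul_eq_mul]
  ring


/-- Claim after Corollary 1: every `Φ ∈ ℂ^{M×N}` satisfies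
`‖Φᴴ·Φ − c·I_N‖_F² ≥ (N−M)·c²`, with equality iff `Φ·Φᴴ = c·I_M`,
i.e., iff the rows of `Φ` are mutually orthogonal with squared norm `c`. -/
theorem stmt7 (M N : ℕ) (hM : 0 < M) (hMN : M ≤ N) (c : ℝ) (hc : 0 < c)
    (Φ : Matrix (Fin M) (Fin N) ℂ) :
    ((N - M : ℕ) : ℝ) * c ^ 2 ≤ frobSq (Φᴴ * Φ - (c : ℂ) • 1) ∧
    (frobSq (Φᴴ * Φ - (c : ℂ) • 1) = ((N - M : ℕ) : ℝ) * c ^ 2 ↔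
      Φ * Φᴴ = (c : ℂ) • 1) := by
  set A := Φᴴ * Φ with hAdef
  set B := Φ * Φᴴ with hBdef
  have hA : Aᴴ = A := by rw [hAdef, conjTranspose_mul, conjTranspose_conjTranspose]
  have hB : Bᴴ = B := by rw [hBdef, conjTranspose_mul, conjTranspose_conjTranspose]
  have htrA : trace A = trace B := trace_mul_comm _ _
  have htrAA : trace (A * A) = trace (B * B) := by
    rw [hAdef, hBdef, Matrix.mul_assoc, trace_mul_comm]; simp only [Matrix.mul_assoc]
  have key : frobSq (A - (c:ℂ) • 1) =
      frobSq (B - (c:ℂ) • 1) + ((N - M : ℕ) : ℝ) * c ^ 2 := by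
    rw [frobSq_eq_trace, frobSq_eq_trace, key_trace A hA c, key_trace B hB c,
      htrA, htrAA]
    have hcast : ((N - M : ℕ) : ℝ) = (N : ℝ) - M := by
      rw [Nat.cast_sub hMN]
    simp only [Fintype.card_fin, Complex.add_re, Complex.sub_re]
    have h1 : ((c:ℂ)^2 * (N:ℂ)).re = c^2 * N := by
      rw [← Complex.ofReal_pow, ← Complex.ofReal_natCast, ← Complex.ofReal_mul,
        Complex.ofReal_re]
    have h2 : ((c:ℂ)^2 * (M:ℂ)).re = c^2 * M := by
      rw [← Complex.ofReal_pow, ← Complex.ofReal_natCast, ← Complex.ofReal_mul,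
        Complex.ofReal_re]
    rw [h1, h2, hcast]
    ring
  constructor
  · rw [key]; linarith [frobSq_nonneg (B - (c:ℂ) • 1)]
  · rw [key]
    constructor
    · intro h
      have h0 : frobSq (B - (c:ℂ) • 1) = 0 := by linarith
      have := (frobSq_eq_zero_iff _).mp h0
      rw [sub_eq_zero] at this
      exact this
    · intro h
      rw [show B - (c:ℂ) • 1 = 0 by rw [h, sub_self],
        (frobSq_eq_zero_iff (0 : Matrix (Fin M) (Fin M) ℂ)).mpr rfl, zero_add]
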